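/- arXiv:2211.04044 — 6 statements merged into one kernel-verified Lean document; each statement's English description precedes it below -/
import Mathlib

section
/- Let W be a finite reflection group on V and let H be any subgroup of W. Then there exists a unique parabolic subgroup of W that minimally contains H; that is, there is a parabolic subgroup P with H ≤ P such that no parabolic subgroup Q of W satisfies H ≤ Q ⊊ P, and any parabolic subgroup minimally containing H equals P. -/
variable {V : Type*} [AddCommGroup V] [Module ℂ V] [FiniteDimensional ℂ V]

/-- A reflection on `V`: an invertible linear endomorphism of finite order, not the identity,
whose fixed-point subspace contains a hyperplane (codimension-one subspace) of `V`. -/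
def IsReflection (g : (V →ₗ[ℂ] V)ˣ) : Prop :=
  g ≠ 1 ∧ IsOfFinOrder g ∧
    ∃ H : Submodule ℂ V, Module.finrank ℂ (V ⧸ H) = 1 ∧ ∀ v ∈ H, g.val v = v

/-- The pointwise stabilizer of a subspace `U ⊆ V` inside the group of invertible linear
endomorphisms of `V`. -/
def pointStab (U : Submodule ℂ V) : Subgroup (V →ₗ[ℂ] V)ˣ where
  carrier := {g | ∀ u ∈ U, g.val u = u}
  one_mem' := fun u _ => rfl
  mul_mem' := by
    intro a b ha hb u hu
    have h : (a * b).val u = a.val (b.val u) := rfl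
    rw [h, hb u hu, ha u hu]
  inv_mem' := by
    intro a ha u hu
    have h1 : a⁻¹.val (a.val u) = u := by
      have h2 : (a⁻¹ * a).val u = u := by rw [inv_mul_cancel a]; rfl
      exact h2
    calc a⁻¹.val u = a⁻¹.val (a.val u) := by rw [ha u hu]
      _ = u := h1

/-- `P` is a parabolic subgroup of `W`: the pointwise stabilizer in `W` of some subspace of `V`. -/
def IsParabolic (W P : Subgroup (V →ₗ[ℂ] V)ˣ) : Prop :=
  ∃ U : Submodule ℂ V, P = W ⊓ pointStab U

/-- Let `W` be a finite reflection group on `V` and `H ≤ W` any subgroup. Then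
there is a unique parabolic subgroup of `W` minimally containing `H`. -/
theorem stmt3 (W H : Subgroup (V →ₗ[ℂ] V)ˣ) (hWfin : Finite W)
    (hW : W = Subgroup.closure {g : (V →ₗ[ℂ] V)ˣ | IsReflection g ∧ g ∈ W})
    (hHW : H ≤ W) :
    ∃! P : Subgroup (V →ₗ[ℂ] V)ˣ, IsParabolic W P ∧ H ≤ P ∧
      ∀ Q : Subgroup (V →ₗ[ℂ] V)ˣ, IsParabolic W Q → H ≤ Q → ¬ Q < P := by
  classical
  -- The subspace of vectors fixed by every element of `H`.
  set U : Submodule ℂ V :=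
    { carrier := {v | ∀ g ∈ H, g.val v = v}
      add_mem' := by
        intro a b ha hb g hg
        rw [map_add, ha g hg, hb g hg]
      zero_mem' := by intro g hg; simp
      smul_mem' := by
        intro c v hv g hg
        rw [map_smul, hv g hg] } with hU
  have hmemU : ∀ v : V, v ∈ U ↔ ∀ g ∈ H, g.val v = v := fun v => Iff.rfl
  set P : Subgroup (V →ₗ[ℂ] V)ˣ := W ⊓ pointStab U with hP
  have hHP : H ≤ P := by
    intro h hh
    refine ⟨hHW hh, ?_⟩
    intro u hu
    exact (hmemU u).mp hu h hh
  -- `P` is below any parabolic containing `H`.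
  have hmin : ∀ Q : Subgroup (V →ₗ[ℂ] V)ˣ, IsParabolic W Q → H ≤ Q → P ≤ Q := by
    rintro Q ⟨U', rfl⟩ hHQ
    have hU'U : ∀ u ∈ U', u ∈ U := by
      intro u hu
      rw [hmemU]
      intro g hg
      exact (hHQ hg).2 u hu
    rintro g ⟨hgW, hgU⟩
    exact ⟨hgW, fun u hu => hgU u (hU'U u hu)⟩
  refine ⟨P, ⟨⟨U, rfl⟩, hHP, ?_⟩, ?_⟩
  · intro Q hQpar hHQ hlt
    exact hlt.not_ge (hmin Q hQpar hHQ)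
  · rintro Q ⟨hQpar, hHQ, hQmin⟩
    have hPQ : P ≤ Q := hmin Q hQpar hHQ
    rcases lt_or_eq_of_le hPQ with hlt | heq
    · exact absurd hlt (hQmin P ⟨U, rfl⟩ hHP)
    · exact heq.symm
end

section
/- Let W be a finite reflection group on V and ℓ a prime. If P is a parabolic subgroup of W minimally containing some Sylow ℓ-subgroup S of W, and P' is a parabolic subgroup of W minimally containing some Sylow ℓ-subgroup S' of W, then P and P' are conjugate in W: there exists w ∈ W with w P w⁻¹ = P'. -/
variable {V : Type*} [AddCommGroup V] [Module ℂ V] [FiniteDimensional ℂ V]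

/-- `P` minimally contains the subgroup `K` among the parabolic subgroups of `W`. -/
def MinimallyContains (W P K : Subgroup (V →ₗ[ℂ] V)ˣ) : Prop :=
  IsParabolic W P ∧ K ≤ P ∧ ∀ Q : Subgroup (V →ₗ[ℂ] V)ˣ, IsParabolic W Q → K ≤ Q → ¬ Q < P

section Aux

variable {V : Type*} [AddCommGroup V] [Module ℂ V] [FiniteDimensional ℂ V]

omit [FiniteDimensional ℂ V] in
lemma mem_pointStab' {U : Submodule ℂ V} {g : (V →ₗ[ℂ] V)ˣ} :
    g ∈ pointStab U ↔ ∀ u ∈ U, g.val u = u := Iff.rfl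

omit [FiniteDimensional ℂ V] in
lemma pointStab_sup' (U U' : Submodule ℂ V) :
    pointStab (U ⊔ U') = pointStab U ⊓ pointStab U' := by
  ext g
  simp only [mem_pointStab', Subgroup.mem_inf]
  constructor
  · intro h
    exact ⟨fun u hu => h u (Submodule.mem_sup_left hu),
           fun u hu => h u (Submodule.mem_sup_right hu)⟩
  · rintro ⟨h1, h2⟩ v hv
    rcases Submodule.mem_sup.mp hv with ⟨y, hy, z, hz, rfl⟩
    rw [map_add, h1 y hy, h2 z hz]

omit [FiniteDimensional ℂ V] in
lemma isParabolic_inf' {W P Q : Subgroup (V →ₗ[ℂ] V)ˣ}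
    (hP : IsParabolic W P) (hQ : IsParabolic W Q) : IsParabolic W (P ⊓ Q) := by
  obtain ⟨U, rfl⟩ := hP
  obtain ⟨U', rfl⟩ := hQ
  exact ⟨U ⊔ U', by rw [pointStab_sup']; exact (inf_inf_distrib_left _ _ _).symm⟩

omit [FiniteDimensional ℂ V] in
lemma minimallyContains_unique' {W P Q K : Subgroup (V →ₗ[ℂ] V)ˣ}
    (hP : MinimallyContains W P K) (hQ : MinimallyContains W Q K) : P = Q := by
  obtain ⟨hPpar, hKP, hPmin⟩ := hP
  obtain ⟨hQpar, hKQ, hQmin⟩ := hQ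
  have hpar := isParabolic_inf' hPpar hQpar
  have hK : K ≤ P ⊓ Q := le_inf hKP hKQ
  have h1 : P ⊓ Q = P := by
    by_contra hne
    exact hPmin _ hpar hK (lt_of_le_of_ne inf_le_left hne)
  have h2 : P ⊓ Q = Q := by
    by_contra hne
    exact hQmin _ hpar hK (lt_of_le_of_ne inf_le_right hne)
  rw [← h1, h2]

omit [FiniteDimensional ℂ V] in
lemma conj_pointStab' (w : (V →ₗ[ℂ] V)ˣ) (U : Submodule ℂ V) :
    Subgroup.map (MulAut.conj w).toMonoidHom (pointStab U)
      = pointStab (U.map (w.val : V →ₗ[ℂ] V)) := by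
  ext g
  rw [Subgroup.mem_map_equiv]
  simp only [mem_pointStab']
  constructor
  · intro h v hv
    rcases Submodule.mem_map.mp hv with ⟨u, hu, rfl⟩
    have := h u hu
    have hcalc : ((MulAut.conj w).symm g).val u = w⁻¹.val (g.val (w.val u)) := by
      rw [MulAut.conj_symm_apply]; rfl
    rw [hcalc] at this
    have := congrArg w.val this
    have hw : w.val (w⁻¹.val (g.val (w.val u))) = g.val (w.val u) := by
      have h2 : (w * w⁻¹).val (g.val (w.val u)) = g.val (w.val u) := by
        rw [mul_inv_cancel w]; rfl
      exact h2
    rw [hw] at this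
    exact this
  · intro h u hu
    have hgu : g.val (w.val u) = w.val u := h _ (Submodule.mem_map_of_mem hu)
    have hcalc : ((MulAut.conj w).symm g).val u = w⁻¹.val (g.val (w.val u)) := by
      rw [MulAut.conj_symm_apply]; rfl
    rw [hcalc, hgu]
    have h2 : (w⁻¹ * w).val u = u := by rw [inv_mul_cancel w]; rfl
    exact h2

omit [FiniteDimensional ℂ V] in
lemma conj_self' {W : Subgroup (V →ₗ[ℂ] V)ˣ} {w : (V →ₗ[ℂ] V)ˣ} (hw : w ∈ W) :
    Subgroup.map (MulAut.conj w).toMonoidHom W = W := by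
  ext g
  rw [Subgroup.mem_map_equiv]
  constructor
  · intro h
    have hmem : w * ((MulAut.conj w).symm g) * w⁻¹ ∈ W := mul_mem (mul_mem hw h) (inv_mem hw)
    have he : w * ((MulAut.conj w).symm g) * w⁻¹ = g := by
      rw [MulAut.conj_symm_apply]; group
    rwa [he] at hmem
  · intro h
    rw [MulAut.conj_symm_apply]
    exact mul_mem (mul_mem (inv_mem hw) h) hw

omit [FiniteDimensional ℂ V] in
lemma conj_isParabolic' {W P : Subgroup (V →ₗ[ℂ] V)ˣ} {w : (V →ₗ[ℂ] V)ˣ} (hw : w ∈ W)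
    (hP : IsParabolic W P) : IsParabolic W (Subgroup.map (MulAut.conj w).toMonoidHom P) := by
  obtain ⟨U, rfl⟩ := hP
  refine ⟨U.map (w.val : V →ₗ[ℂ] V), ?_⟩
  rw [Subgroup.map_inf W (pointStab U) (MulAut.conj w).toMonoidHom (MulAut.conj w).injective,
    conj_self' hw, conj_pointStab']

end Aux

lemma conj_map_conj_inv {G : Type*} [Group G] (w : G) (H : Subgroup G) :
    Subgroup.map (MulAut.conj w⁻¹).toMonoidHom
      (Subgroup.map (MulAut.conj w).toMonoidHom H) = H := by
  rw [Subgroup.map_map]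
  convert Subgroup.map_id H using 2
  ext x
  simp [MulAut.conj_apply, mul_assoc]

section Aux2

variable {V : Type*} [AddCommGroup V] [Module ℂ V]

lemma conj_minimallyContains {W P K : Subgroup (V →ₗ[ℂ] V)ˣ} {w : (V →ₗ[ℂ] V)ˣ}
    (hw : w ∈ W) (h : MinimallyContains W P K) :
    MinimallyContains W (Subgroup.map (MulAut.conj w).toMonoidHom P)
      (Subgroup.map (MulAut.conj w).toMonoidHom K) := by
  obtain ⟨hpar, hKP, hmin⟩ := h
  refine ⟨conj_isParabolic' hw hpar, Subgroup.map_mono hKP, ?_⟩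
  intro Q hQpar hKQ hlt
  have hQ'par : IsParabolic W (Subgroup.map (MulAut.conj w⁻¹).toMonoidHom Q) :=
    conj_isParabolic' (inv_mem hw) hQpar
  have hKQ' : K ≤ Subgroup.map (MulAut.conj w⁻¹).toMonoidHom Q := by
    have := Subgroup.map_mono (f := (MulAut.conj w⁻¹).toMonoidHom) hKQ
    rwa [conj_map_conj_inv] at this
  refine hmin _ hQ'par hKQ' ?_
  constructor
  · have := Subgroup.map_mono (f := (MulAut.conj w⁻¹).toMonoidHom) hlt.le
    rwa [conj_map_conj_inv] at this
  · intro hle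
    have := Subgroup.map_mono (f := (MulAut.conj w).toMonoidHom) hle
    have heq : Subgroup.map (MulAut.conj w).toMonoidHom
        (Subgroup.map (MulAut.conj w⁻¹).toMonoidHom Q) = Q := by
      conv_lhs => rw [show w = (w⁻¹)⁻¹ by group]
      exact conj_map_conj_inv w⁻¹ Q
    rw [heq] at this
    exact absurd this (not_le_of_gt hlt)

end Aux2

open Pointwise in
lemma map_subtype_conj_smul {G : Type*} [Group G] (W : Subgroup G) (g : W) (H : Subgroup W) :
    Subgroup.map W.subtype (MulAut.conj g • H)
      = Subgroup.map (MulAut.conj (g : G)).toMonoidHom (Subgroup.map W.subtype H) := by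
  ext x
  simp only [Subgroup.mem_map, Subgroup.mem_smul_pointwise_iff_exists]
  constructor
  · rintro ⟨y, ⟨s, hs, rfl⟩, rfl⟩
    exact ⟨↑s, ⟨s, hs, rfl⟩, by simp [MulAut.conj_apply]⟩
  · rintro ⟨y, ⟨s, hs, rfl⟩, rfl⟩
    exact ⟨g * s * g⁻¹, ⟨s, hs, rfl⟩, by simp [MulAut.conj_apply]⟩

open Pointwise in
lemma map_subtype_sylow_smul {G : Type*} [Group G] {p : ℕ} (W : Subgroup G) (g : W)
    (S : Sylow p W) :
    Subgroup.map W.subtype ((g • S : Sylow p W) : Subgroup W)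
      = Subgroup.map (MulAut.conj (g : G)).toMonoidHom (Subgroup.map W.subtype (S : Subgroup W)) := by
  rw [show ((g • S : Sylow p W) : Subgroup W) = MulAut.conj g • (S : Subgroup W) from rfl]
  exact map_subtype_conj_smul W g _

/-- Let `W` be a finite reflection group on `V` and `ℓ` a prime. If the parabolic
subgroup `P` minimally contains a Sylow `ℓ`-subgroup `S` of `W` and the parabolic subgroup `P'`
minimally contains a Sylow `ℓ`-subgroup `S'` of `W`, then `P` and `P'` are conjugate by an
element of `W`. -/
theorem stmt4 (ℓ : ℕ) (hℓ : ℓ.Prime) (W : Subgroup (V →ₗ[ℂ] V)ˣ) (hWfin : Finite W)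
    (hW : W = Subgroup.closure {g : (V →ₗ[ℂ] V)ˣ | IsReflection g ∧ g ∈ W})
    (S S' : Sylow ℓ W) (P P' : Subgroup (V →ₗ[ℂ] V)ˣ)
    (hP : MinimallyContains W P (Subgroup.map W.subtype (S : Subgroup W)))
    (hP' : MinimallyContains W P' (Subgroup.map W.subtype (S' : Subgroup W))) :
    ∃ w : (V →ₗ[ℂ] V)ˣ, w ∈ W ∧ Subgroup.map (MulAut.conj w).toMonoidHom P = P' := by
  haveI : Fact ℓ.Prime := ⟨hℓ⟩
  obtain ⟨g, hg⟩ := MulAction.exists_smul_eq W S S'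
  refine ⟨(g : (V →ₗ[ℂ] V)ˣ), g.2, ?_⟩
  have hkey : Subgroup.map W.subtype (S' : Subgroup W)
      = Subgroup.map (MulAut.conj (g : (V →ₗ[ℂ] V)ˣ)).toMonoidHom
          (Subgroup.map W.subtype (S : Subgroup W)) := by
    rw [← hg, map_subtype_sylow_smul]
  have h1 := conj_minimallyContains g.2 hP
  rw [← hkey] at h1
  exact minimallyContains_unique' h1 hP'
end

section
/- Let G be a finite group, ℓ a prime, and ρ a group automorphism of G whose order is a power of ℓ (i.e., |ρ| = ℓ^i for some natural number i). Then there exists a Sylow ℓ-subgroup S of G that is stable under ρ, i.e., ρ(S) = S. -/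
/-- Let `G` be a finite group, `ℓ` a prime, and `ρ` an automorphism of `G` whose
order is a power of `ℓ`. Then some Sylow `ℓ`-subgroup of `G` is stable under `ρ`. -/
theorem stmt6 {G : Type*} [Group G] [Finite G] (ℓ : ℕ) (hℓ : ℓ.Prime)
    (ρ : MulAut G) (i : ℕ) (hρ : orderOf ρ = ℓ ^ i) :
    ∃ S : Sylow ℓ G, Subgroup.map ρ.toMonoidHom (S : Subgroup G) = (S : Subgroup G) := by
  have : Fact ℓ.Prime := ⟨hℓ⟩
  have hP : IsPGroup ℓ (Subgroup.zpowers ρ) :=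
    IsPGroup.of_card (by rw [Nat.card_zpowers, hρ])
  have hndvd : ¬ ℓ ∣ Nat.card (Sylow ℓ G) := by
    intro h
    have h1 : (1:ℕ) ≡ 0 [MOD ℓ] :=
      (card_sylow_modEq_one ℓ G).symm.trans (Nat.modEq_zero_iff_dvd.mpr h)
    exact hℓ.ne_one (Nat.dvd_one.mp (Nat.modEq_zero_iff_dvd.mp h1))
  obtain ⟨S, hS⟩ := hP.nonempty_fixed_point_of_prime_not_dvd_card (Sylow ℓ G) hndvd
  refine ⟨S, ?_⟩
  have h2 : (ρ • S : Sylow ℓ G) = S := hS ⟨ρ, Subgroup.mem_zpowers ρ⟩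
  have h3 := congrArg (fun T : Sylow ℓ G => (T : Subgroup G)) h2
  exact (by simpa [Sylow.pointwise_smul_def, Subgroup.pointwise_smul_def] using h3 :
    Subgroup.map (MulDistribMulAction.toMonoidHom G ρ) (S : Subgroup G) = (S : Subgroup G))
end

section
/- Let ℓ be an odd prime and i ≥ 1 a natural number, and set n := ℓ^i. Let ρ be the 'reversal' permutation of Fin n given by ρ(k) = n − 1 − k (an involution). Then there exists a Sylow ℓ-subgroup S of the symmetric group Equiv.Perm (Fin n) that is stable under conjugation by ρ, i.e., ρ g ρ⁻¹ ∈ S for every g ∈ S. -/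
open Equiv Subgroup

section Wreath

variable {α β : Type*}

/-- The wreath-product-style subgroup of `Perm (α × β)`: permutations of the form
`(a, b) ↦ (k a, f a b)` with `k ∈ K` and `f a ∈ S` for all `a`. -/
def wrS (K : Subgroup (Equiv.Perm α)) (S : Subgroup (Equiv.Perm β)) :
    Subgroup (Equiv.Perm (α × β)) where
  carrier := { σ | ∃ k ∈ K, ∃ f : α → Equiv.Perm β, (∀ a, f a ∈ S) ∧
    ∀ p : α × β, σ p = (k p.1, f p.1 p.2) }
  one_mem' := ⟨1, K.one_mem, fun _ => 1, fun _ => S.one_mem, fun _ => rfl⟩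
  mul_mem' := by
    rintro σ τ ⟨k, hk, f, hf, hσ⟩ ⟨k', hk', f', hf', hτ⟩
    refine ⟨k * k', K.mul_mem hk hk', fun a => f (k' a) * f' a,
      fun a => S.mul_mem (hf _) (hf' _), fun p => ?_⟩
    simp only [Equiv.Perm.mul_apply, hτ, hσ]
  inv_mem' := by
    rintro σ ⟨k, hk, f, hf, hσ⟩
    refine ⟨k⁻¹, K.inv_mem hk, fun a => (f (k⁻¹ a))⁻¹, fun a => S.inv_mem (hf _), fun p => ?_⟩
    rw [Equiv.Perm.inv_eq_iff_eq, hσ]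
    simp

lemma wrS_card [Fintype α] [DecidableEq α] [Nonempty β]
    (K : Subgroup (Equiv.Perm α)) (S : Subgroup (Equiv.Perm β)) :
    Nat.card (wrS K S) = Nat.card K * Nat.card S ^ Fintype.card α := by
  have e : (K × (α → S)) ≃ (wrS K S) := by
    refine Equiv.ofBijective
      (fun kf => ⟨Equiv.prodShear (kf.1 : Equiv.Perm α) (fun a => (kf.2 a : Equiv.Perm β)),
        (kf.1 : Equiv.Perm α), kf.1.2, fun a => (kf.2 a : Equiv.Perm β), fun a => (kf.2 a).2,
        fun _ => rfl⟩) ⟨?_, ?_⟩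
    · rintro ⟨k, f⟩ ⟨k', f'⟩ h
      obtain ⟨b⟩ := ‹Nonempty β›
      simp only [Subtype.mk.injEq] at h
      have happ : ∀ (a : α) (c : β),
          ((k : Equiv.Perm α) a, (f a : Equiv.Perm β) c)
            = ((k' : Equiv.Perm α) a, (f' a : Equiv.Perm β) c) := by
        intro a c
        have := congrArg (fun (σ : wrS K S) => (σ : Equiv.Perm (α × β)) (a, c)) h
        simpa using this
      have hk : k = k' := by
        ext a
        exact (Prod.ext_iff.1 (happ a b)).1
      have hfa : f = f' := by
        funext a
        ext c
        exact (Prod.ext_iff.1 (happ a c)).2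
      rw [hk, hfa]
    · rintro ⟨σ, k, hk, f, hf, hσ⟩
      exact ⟨(⟨k, hk⟩, fun a => ⟨f a, hf a⟩), Subtype.ext (Equiv.ext fun p => (hσ p).symm)⟩
  rw [← Nat.card_congr e, Nat.card_prod, Nat.card_fun]
  simp [Nat.card_eq_fintype_card]

lemma wrS_stable (K : Subgroup (Equiv.Perm α)) (S : Subgroup (Equiv.Perm β))
    (rα : Equiv.Perm α) (rβ : Equiv.Perm β)
    (hK : ∀ g ∈ K, rα * g * rα⁻¹ ∈ K) (hS : ∀ g ∈ S, rβ * g * rβ⁻¹ ∈ S) :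
    ∀ g ∈ wrS K S,
      (Equiv.prodCongr rα rβ) * g * (Equiv.prodCongr rα rβ)⁻¹ ∈ wrS K S := by
  rintro σ ⟨k, hk, f, hf, hσ⟩
  refine ⟨rα * k * rα⁻¹, hK _ hk, fun a => rβ * f (rα⁻¹ a) * rβ⁻¹,
    fun a => hS _ (hf _), fun p => ?_⟩
  have h1 : (Equiv.prodCongr rα rβ)⁻¹ p = (rα⁻¹ p.1, rβ⁻¹ p.2) := rfl
  simp only [Equiv.Perm.mul_apply, h1, hσ]
  rfl

/-- `Equiv.permCongr` as a `MulEquiv`. -/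
def permCongrMul (e : α ≃ β) : Equiv.Perm α ≃* Equiv.Perm β where
  toFun p := (e.symm.trans p).trans e
  invFun p := (e.trans p).trans e.symm
  left_inv p := by ext a; simp
  right_inv p := by ext b; simp
  map_mul' p q := by ext b; simp [Equiv.Perm.mul_apply]

end Wreath

lemma rev_finRotate_rev (n : ℕ) :
    Fin.revPerm * finRotate (n + 1) * Fin.revPerm⁻¹ = (finRotate (n + 1))⁻¹ := by
  have hrot : ∀ j : Fin (n + 1), (finRotate (n + 1) j).val
      = if j.val = n then 0 else j.val + 1 := by
    intro j
    by_cases h : j = Fin.last n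
    · subst h
      simp [finRotate_succ_apply, Fin.val_add_one]
    · rw [finRotate_succ_apply, Fin.val_add_one, if_neg h,
        if_neg (fun hv => h (Fin.ext (by simpa using hv)))]
  rw [eq_inv_iff_mul_eq_one]
  ext k
  have hk := k.isLt
  simp only [Equiv.Perm.mul_apply, Equiv.Perm.one_apply]
  have hinv : (Fin.revPerm : Equiv.Perm (Fin (n + 1)))⁻¹ = Fin.revPerm := rfl
  rw [hinv]
  simp only [Fin.revPerm_apply, Fin.val_rev, hrot]
  split_ifs <;> omega

lemma zpowers_rot_stable (n : ℕ) :
    ∀ g ∈ Subgroup.zpowers (finRotate (n + 1)),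
      Fin.revPerm * g * Fin.revPerm⁻¹ ∈ Subgroup.zpowers (finRotate (n + 1)) := by
  rintro g ⟨z, rfl⟩
  have h1 : Fin.revPerm * (finRotate (n + 1)) ^ z * Fin.revPerm⁻¹
      = ((finRotate (n + 1))⁻¹) ^ z := by
    rw [← rev_finRotate_rev n]
    simpa [MulAut.conj_apply] using
      map_zpow (MulAut.conj (Fin.revPerm (n := n + 1))) (finRotate (n + 1)) z
  rw [h1]
  exact Subgroup.zpow_mem _ (Subgroup.inv_mem _ (Subgroup.mem_zpowers _)) z

lemma finProd_rev (m n : ℕ) (p : Fin m × Fin n) :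
    finProdFinEquiv (p.1.rev, p.2.rev) = (finProdFinEquiv p).rev := by
  apply Fin.val_injective
  simp only [finProdFinEquiv_apply_val, Fin.val_rev]
  have h0 : (p.1 : ℕ) < m := p.1.isLt
  have h1 : (p.2 : ℕ) < n := p.2.isLt
  have h2 : n * (m - ((p.1 : ℕ) + 1)) + n * ((p.1 : ℕ) + 1) = n * m := by
    rw [← Nat.mul_add]
    congr 1
    omega
  have h3 : n * ((p.1 : ℕ) + 1) = n * (p.1 : ℕ) + n := by ring
  have h4 : m * n = n * m := Nat.mul_comm m n
  omega

lemma aux_val (ℓ : ℕ) (hℓ : ℓ.Prime) :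
    ∀ i : ℕ, (ℓ - 1) * padicValNat ℓ (Nat.factorial (ℓ ^ i)) + 1 = ℓ ^ i := by
  haveI := Fact.mk hℓ
  intro i
  induction i with
  | zero => simp
  | succ i ih =>
    have hrec : padicValNat ℓ (Nat.factorial (ℓ ^ (i + 1)))
        = padicValNat ℓ (Nat.factorial (ℓ ^ i)) + ℓ ^ i := by
      rw [pow_succ', padicValNat_factorial_mul]
    rw [hrec]
    have h2 : ℓ - 1 + 1 = ℓ := by have := hℓ.pos; omega
    have hd : (ℓ - 1) * (padicValNat ℓ (Nat.factorial (ℓ ^ i)) + ℓ ^ i)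
        = (ℓ - 1) * padicValNat ℓ (Nat.factorial (ℓ ^ i)) + (ℓ - 1) * ℓ ^ i :=
      Nat.mul_add _ _ _
    have hs : (ℓ - 1) * ℓ ^ i + ℓ ^ i = ℓ ^ (i + 1) := by
      have : (ℓ - 1) * ℓ ^ i + ℓ ^ i = (ℓ - 1 + 1) * ℓ ^ i := by ring
      rw [this, h2, ← pow_succ']
    omega

lemma key_sylow (ℓ : ℕ) (hℓ : ℓ.Prime) :
    ∀ i : ℕ, ∃ S : Subgroup (Equiv.Perm (Fin (ℓ ^ i))),
      Nat.card S = ℓ ^ padicValNat ℓ (Nat.factorial (ℓ ^ i)) ∧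
      ∀ g ∈ S, Fin.revPerm * g * Fin.revPerm⁻¹ ∈ S := by
  haveI := Fact.mk hℓ
  intro i
  induction i with
  | zero =>
    refine ⟨⊥, by simp; exact Subgroup.card_bot, ?_⟩
    intro g hg
    rw [Subgroup.mem_bot] at hg ⊢
    subst hg
    rw [mul_one, mul_inv_cancel]
  | succ i ih =>
    obtain ⟨S, hcard, hstab⟩ := ih
    obtain ⟨n, hn⟩ : ∃ n, ℓ = n + 1 := ⟨ℓ - 1, by have := hℓ.pos; omega⟩
    set K := Subgroup.zpowers (finRotate ℓ) with hK
    have hmn : ℓ * ℓ ^ i = ℓ ^ (i + 1) := (pow_succ' ℓ i).symm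
    let E : Fin ℓ × Fin (ℓ ^ i) ≃ Fin (ℓ ^ (i + 1)) := finProdFinEquiv.trans (finCongr hmn)
    let Φ := permCongrMul E
    haveI : Nonempty (Fin (ℓ ^ i)) := ⟨⟨0, pow_pos hℓ.pos i⟩⟩
    have hKcard : Nat.card K = ℓ := by
      rw [hK, Nat.card_zpowers]
      have hc : (finRotate ℓ).IsCycle := isCycle_finRotate_of_le hℓ.two_le
      rw [hc.orderOf, support_finRotate_of_le hℓ.two_le, Finset.card_univ, Fintype.card_fin]
    have hKstab : ∀ g ∈ K, Fin.revPerm * g * Fin.revPerm⁻¹ ∈ K := by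
      subst hn
      exact zpowers_rot_stable n
    have hpair : ∀ p : Fin ℓ × Fin (ℓ ^ i), E (p.1.rev, p.2.rev) = (E p).rev := by
      intro p
      apply Fin.val_injective
      have := congrArg Fin.val (finProd_rev ℓ (ℓ ^ i) p)
      simpa [E, finCongr_apply, hmn] using this
    have hrev : Φ (Equiv.prodCongr Fin.revPerm Fin.revPerm) = Fin.revPerm := by
      apply Equiv.ext
      intro x
      have h1 : Φ (Equiv.prodCongr Fin.revPerm Fin.revPerm) x
          = E ((Equiv.prodCongr Fin.revPerm Fin.revPerm) (E.symm x)) := rfl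
      rw [h1]
      have h2 : (Equiv.prodCongr (Fin.revPerm (n := ℓ)) (Fin.revPerm (n := ℓ ^ i))) (E.symm x)
          = ((E.symm x).1.rev, (E.symm x).2.rev) := rfl
      rw [h2, hpair, E.apply_symm_apply]
      rfl
    refine ⟨(wrS K S).map Φ.toMonoidHom, ?_, ?_⟩
    · have hmap : Nat.card ((wrS K S).map Φ.toMonoidHom) = Nat.card (wrS K S) :=
        (Nat.card_congr
          (Subgroup.equivMapOfInjective (wrS K S) Φ.toMonoidHom Φ.injective).toEquiv).symm
      rw [hmap, wrS_card, hKcard, hcard, Fintype.card_fin]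
      have hν := aux_val ℓ hℓ i
      set ν := padicValNat ℓ (Nat.factorial (ℓ ^ i)) with hνdef
      have hrec : padicValNat ℓ (Nat.factorial (ℓ ^ (i + 1))) = ν + ℓ ^ i := by
        rw [← hmn, padicValNat_factorial_mul]
      rw [hrec, ← pow_mul]
      have h2 : ℓ - 1 + 1 = ℓ := by have := hℓ.pos; omega
      have h1 : (ℓ - 1) * ν + ν = ν * ℓ := by
        have : (ℓ - 1) * ν + ν = (ℓ - 1 + 1) * ν := by ring
        rw [this, h2, Nat.mul_comm]
      have hexp : 1 + ν * ℓ = ν + ℓ ^ i := by omega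
      rw [← hexp, pow_add, pow_one]
    · intro g hg
      rw [Subgroup.mem_map] at hg ⊢
      obtain ⟨σ, hσ, rfl⟩ := hg
      refine ⟨(Equiv.prodCongr Fin.revPerm Fin.revPerm) * σ
        * (Equiv.prodCongr Fin.revPerm Fin.revPerm)⁻¹,
        wrS_stable K S _ _ hKstab hstab σ hσ, ?_⟩
      simp only [MulEquiv.coe_toMonoidHom, map_mul, map_inv, hrev]

/-- Let `ℓ` be an odd prime, `i ≥ 1`, and `n := ℓ^i`. Let `ρ` be the reversal
permutation of `Fin n` (sending `k` to `n - 1 - k`). Then there is a Sylow `ℓ`-subgroup of the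
symmetric group `Equiv.Perm (Fin n)` stable under conjugation by `ρ`. -/
theorem stmt7 (ℓ i : ℕ) (hℓ : ℓ.Prime) (hodd : Odd ℓ) (hi : 1 ≤ i) :
    ∃ S : Sylow ℓ (Equiv.Perm (Fin (ℓ ^ i))),
      ∀ g ∈ S, Fin.revPerm * g * Fin.revPerm⁻¹ ∈ S := by
  haveI := Fact.mk hℓ
  obtain ⟨S, hcard, hstab⟩ := key_sylow ℓ hℓ i
  have hcard' : Nat.card S
      = ℓ ^ (Nat.card (Equiv.Perm (Fin (ℓ ^ i)))).factorization ℓ := by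
    have hG : Nat.card (Equiv.Perm (Fin (ℓ ^ i))) = Nat.factorial (ℓ ^ i) := by
      simp [Nat.card_eq_fintype_card, Fintype.card_perm]
    rw [hG, Nat.factorization_def _ hℓ]
    exact hcard
  exact ⟨Sylow.ofCard S hcard', hstab⟩
end

section
/- Let m ≥ 1 be odd, let ℓ be an odd prime dividing m, set ν := ν_ℓ(m) and d := ℓ^ν, and let R be the subgroup of DihedralGroup m generated by the rotation r (m/d) and the reflection sr 0 (a dihedral subgroup of order 2d). Then R is self-normalizing: the normalizer of R in DihedralGroup m equals R. -/
/-- Index of a dihedral element. -/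
def dihI {m : ℕ} : DihedralGroup m → ZMod m
  | .r i => i
  | .sr i => i

/-- The subgroup of elements whose index is killed by `d`. -/
def dihSub (m d : ℕ) : Subgroup (DihedralGroup m) where
  carrier := {g | (d : ZMod m) * dihI g = 0}
  one_mem' := by
    show (d : ZMod m) * dihI (DihedralGroup.r 0) = 0
    simp [dihI]
  mul_mem' := by
    rintro (⟨i⟩ | ⟨i⟩) (⟨j⟩ | ⟨j⟩) hi hj <;>
    · have hi' : (d : ZMod m) * i = 0 := hi
      have hj' : (d : ZMod m) * j = 0 := hj
      first
      | (show (d : ZMod m) * (i + j) = 0; linear_combination hi' + hj')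
      | (show (d : ZMod m) * (j - i) = 0; linear_combination hj' - hi')
  inv_mem' := by
    rintro (⟨i⟩ | ⟨i⟩) hi
    · have hi' : (d : ZMod m) * i = 0 := hi
      show (d : ZMod m) * (-i) = 0
      linear_combination -hi'
    · exact hi

lemma r_natCast_pow (m c : ℕ) (t : ℕ) :
    (DihedralGroup.r ((c : ℕ) : ZMod m)) ^ t = DihedralGroup.r ((c * t : ℕ) : ZMod m) := by
  induction t with
  | zero => simp [DihedralGroup.one_def, -DihedralGroup.r_zero]
  | succ t ih =>
    rw [pow_succ, ih, DihedralGroup.r_mul_r]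
    congr 1
    push_cast
    ring

lemma exists_mul_of_mul_eq_zero (m d : ℕ) [NeZero m] (hd : d ∣ m) (hdpos : 0 < d)
    (i : ZMod m) (h : (d : ZMod m) * i = 0) :
    ∃ t : ℕ, i = ((m / d * t : ℕ) : ZMod m) := by
  obtain ⟨k, hk⟩ := hd
  have hval : i = ((i.val : ℕ) : ZMod m) := by
    rw [ZMod.natCast_val, ZMod.cast_id]
  have h2 : ((d * i.val : ℕ) : ZMod m) = 0 := by push_cast; rw [← hval]; exact h
  rw [ZMod.natCast_eq_zero_iff] at h2
  have hkdvd : k ∣ i.val := by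
    obtain ⟨s, hs⟩ := h2
    have hs' : d * i.val = d * (k * s) := by rw [← mul_assoc, ← hk]; exact hs
    exact ⟨s, Nat.eq_of_mul_eq_mul_left hdpos hs'⟩
  obtain ⟨t, ht⟩ := hkdvd
  refine ⟨t, ?_⟩
  have hmk : m / d = k := by rw [hk]; exact Nat.mul_div_cancel_left k hdpos
  rw [hmk, hval, ht]

/-- Let `m ≥ 1` be odd, `ℓ` an odd prime dividing `m`, `ν := ν_ℓ(m)`,
`d := ℓ^ν`, and let `R` be the subgroup of `DihedralGroup m` generated by the rotation
`r (m/d)` and the reflection `sr 0` (a dihedral subgroup of order `2d`). Then `R` is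
self-normalizing. -/
theorem stmt9 (m ℓ : ℕ) (hm : 1 ≤ m) (hmodd : Odd m) (hℓ : ℓ.Prime) (hℓodd : Odd ℓ)
    (hdvd : ℓ ∣ m) :
    Subgroup.normalizer (Subgroup.closure
        {DihedralGroup.r ((m / ℓ ^ padicValNat ℓ m : ℕ) : ZMod m), DihedralGroup.sr 0}) =
      Subgroup.closure
        {DihedralGroup.r ((m / ℓ ^ padicValNat ℓ m : ℕ) : ZMod m), DihedralGroup.sr 0} := by
  haveI : NeZero m := ⟨by omega⟩
  set d := ℓ ^ padicValNat ℓ m with hd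
  set k := m / d with hkdef
  have hdpos : 0 < d := pow_pos hℓ.pos _
  have hddvd : d ∣ m := pow_padicValNat_dvd
  have hkd : k * d = m := Nat.div_mul_cancel hddvd
  have hdk0 : ((d : ZMod m)) * (k : ZMod m) = 0 := by
    rw [← Nat.cast_mul, mul_comm, hkd, ZMod.natCast_self]
  have hsr0 : DihedralGroup.sr 0 ∈ dihSub m d := by
    show (d : ZMod m) * dihI (DihedralGroup.sr 0) = 0
    simp [dihI]
  have hclo : Subgroup.closure {DihedralGroup.r ((k : ℕ) : ZMod m), DihedralGroup.sr 0}
      = dihSub m d := by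
    apply le_antisymm
    · rw [Subgroup.closure_le]
      rintro g (rfl | rfl)
      · exact hdk0
      · exact hsr0
    · rintro (⟨i⟩ | ⟨i⟩) hi
      · obtain ⟨t, rfl⟩ := exists_mul_of_mul_eq_zero m d hddvd hdpos i hi
        rw [← hkdef, ← r_natCast_pow]
        exact pow_mem (Subgroup.subset_closure (by simp)) t
      · obtain ⟨t, rfl⟩ := exists_mul_of_mul_eq_zero m d hddvd hdpos i hi
        have hsr : (DihedralGroup.sr ((m / d * t : ℕ) : ZMod m)) =
            DihedralGroup.sr 0 * DihedralGroup.r ((m / d * t : ℕ) : ZMod m) := by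
          rw [DihedralGroup.sr_mul_r, zero_add]
        rw [← hkdef, hsr]
        refine mul_mem (Subgroup.subset_closure (by simp)) ?_
        rw [← r_natCast_pow]
        exact pow_mem (Subgroup.subset_closure (by rw [← hkdef]; simp)) t
  rw [hclo]
  have h2unit : IsUnit (2 : ZMod m) := by
    have := (ZMod.isUnit_iff_coprime 2 m).mpr (Nat.coprime_two_left.mpr hmodd)
    simpa using this
  have hcancel : ∀ x : ZMod m, 2 * x = 0 → x = 0 := by
    intro x hx
    obtain ⟨u, hu⟩ := h2unit
    calc x = ↑u⁻¹ * (2 * x) := by rw [← hu, ← mul_assoc, Units.inv_mul, one_mul]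
    _ = 0 := by rw [hx, mul_zero]
  apply le_antisymm
  · rintro g hg
    have hconj := (Subgroup.mem_normalizer_iff.mp hg (DihedralGroup.sr 0)).mp hsr0
    match g, hconj with
    | DihedralGroup.r a, hconj =>
      have heq : DihedralGroup.r a * DihedralGroup.sr 0 * (DihedralGroup.r a)⁻¹ =
          DihedralGroup.sr (-(2 * a)) := by
        have hinv : (DihedralGroup.r a)⁻¹ = DihedralGroup.r (-a) := rfl
        rw [hinv, DihedralGroup.r_mul_sr, DihedralGroup.sr_mul_r]
        congr 1
        ring
      rw [heq] at hconj
      have hconj' : (d : ZMod m) * (-(2 * a)) = 0 := hconj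
      have h2a : (2 : ZMod m) * ((d : ZMod m) * a) = 0 := by linear_combination -hconj'
      exact hcancel _ h2a
    | DihedralGroup.sr a, hconj =>
      have heq : DihedralGroup.sr a * DihedralGroup.sr 0 * (DihedralGroup.sr a)⁻¹ =
          DihedralGroup.sr (2 * a) := by
        have hinv : (DihedralGroup.sr a)⁻¹ = DihedralGroup.sr a := rfl
        rw [hinv, DihedralGroup.sr_mul_sr, DihedralGroup.r_mul_sr]
        congr 1
        ring
      rw [heq] at hconj
      have hconj' : (d : ZMod m) * (2 * a) = 0 := hconj
      have h2a : (2 : ZMod m) * ((d : ZMod m) * a) = 0 := by linear_combination hconj'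
      exact hcancel _ h2a
  · exact Subgroup.le_normalizer
end

section
/- Let m ≥ 2 be even, let ℓ be an odd prime dividing m, set ν := ν_ℓ(m) and d := ℓ^ν, and let R be the subgroup of DihedralGroup m generated by the rotation r (m/d) and the reflection sr 0 (a dihedral subgroup of order 2d). Then the normalizer of R in DihedralGroup m is the subgroup generated by R together with the order-two rotation r (m/2), and it has order 4d = 2·|R|. -/
namespace Stmt10Aux

open DihedralGroup AddSubgroup

variable {n : ℕ}

@[simp] theorem inv_r' (i : ZMod n) : (r i)⁻¹ = r (-i) := rfl
@[simp] theorem inv_sr' (i : ZMod n) : (sr i)⁻¹ = sr i := rfl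

/-- The dihedral subgroup attached to an additive subgroup of rotations. -/
def D (M : AddSubgroup (ZMod n)) : Subgroup (DihedralGroup n) where
  carrier := {x | match x with | .r j => j ∈ M | .sr j => j ∈ M}
  one_mem' := M.zero_mem
  mul_mem' := by
    rintro (a | a) (b | b) ha hb
    · exact M.add_mem ha hb
    · exact M.sub_mem hb ha
    · exact M.add_mem ha hb
    · exact M.sub_mem hb ha
  inv_mem' := by
    rintro (a | a) h
    · exact M.neg_mem h
    · exact h

theorem r_mem_D {M : AddSubgroup (ZMod n)} {j : ZMod n} : r j ∈ D M ↔ j ∈ M := Iff.rfl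
theorem sr_mem_D {M : AddSubgroup (ZMod n)} {j : ZMod n} : sr j ∈ D M ↔ j ∈ M := Iff.rfl

theorem D_mono {M M' : AddSubgroup (ZMod n)} (h : M ≤ M') : D M ≤ D M' := by
  rintro (j | j) hj
  · exact h hj
  · exact h hj

theorem r_zpow (a : ZMod n) (k : ℤ) : (r a) ^ k = r (k • a) := by
  induction k using Int.induction_on with
  | zero => simp
  | succ i ih => rw [zpow_add_one, ih, r_mul_r, add_smul, one_smul]
  | pred i ih => rw [zpow_sub_one, ih, inv_r', r_mul_r, sub_smul, one_smul, sub_eq_add_neg]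

theorem D_eq_closure (a : ZMod n) :
    D (zmultiples a) = Subgroup.closure {r a, sr 0} := by
  apply le_antisymm
  · rintro (j | j) hj
    · obtain ⟨k, hk⟩ := mem_zmultiples_iff.mp hj
      have : r j = (r a) ^ k := by rw [r_zpow, hk]
      rw [this]
      exact zpow_mem (Subgroup.subset_closure (by simp)) k
    · obtain ⟨k, hk⟩ := mem_zmultiples_iff.mp hj
      have : sr j = sr 0 * (r a) ^ k := by rw [r_zpow, hk, sr_mul_r, zero_add]
      rw [this]
      exact mul_mem (Subgroup.subset_closure (by simp))
        (zpow_mem (Subgroup.subset_closure (by simp)) k)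
  · rw [Subgroup.closure_le]
    rintro x hx
    rcases hx with rfl | rfl
    · exact mem_zmultiples a
    · exact (zmultiples a).zero_mem

/-- The "half" subgroup: elements whose double lies in `M`. -/
def Mh (M : AddSubgroup (ZMod n)) : AddSubgroup (ZMod n) where
  carrier := {j | 2 * j ∈ M}
  zero_mem' := by simpa using M.zero_mem
  add_mem' := by
    intro a b ha hb
    simpa [mul_add] using M.add_mem ha hb
  neg_mem' := by
    intro a ha
    simpa using M.neg_mem ha

theorem mem_Mh {M : AddSubgroup (ZMod n)} {j : ZMod n} : j ∈ Mh M ↔ 2 * j ∈ M := Iff.rfl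

theorem normalizer_D (M : AddSubgroup (ZMod n)) :
    Subgroup.normalizer (D M : Set (DihedralGroup n)) = D (Mh M) := by
  ext x
  rw [Subgroup.mem_normalizer_iff]
  cases x with
  | r j =>
    rw [r_mem_D, mem_Mh]
    constructor
    · intro h
      have h0 := (h (sr 0)).mp ((sr_mem_D (M := M)).mpr M.zero_mem)
      simp only [r_mul_sr, inv_r', sr_mul_r, zero_sub] at h0
      rw [sr_mem_D] at h0
      have := M.neg_mem h0
      simpa [two_mul] using this
    · intro h2 g
      cases g with
      | r i => simp [r_mem_D]
      | sr i =>
        simp only [r_mul_sr, inv_r', sr_mul_r, sr_mem_D]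
        constructor
        · intro hi
          have : i - j + -j = i - 2 * j := by ring
          rw [this]
          exact M.sub_mem hi h2
        · intro hi
          have : i = (i - j + -j) + 2 * j := by ring
          rw [this]
          exact M.add_mem hi h2
  | sr j =>
    rw [sr_mem_D, mem_Mh]
    constructor
    · intro h
      have h0 := (h (sr 0)).mp ((sr_mem_D (M := M)).mpr M.zero_mem)
      simp only [sr_mul_sr, inv_sr', r_mul_sr, sub_zero] at h0
      rw [sr_mem_D] at h0
      simpa [two_mul] using h0
    · intro h2 g
      cases g with
      | r i =>
        simp only [sr_mul_r, inv_sr', sr_mul_sr, r_mem_D]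
        constructor
        · intro hi
          have : j - (j + i) = -i := by ring
          rw [this]
          exact M.neg_mem hi
        · intro hi
          have : i = -(j - (j + i)) := by ring
          rw [this]
          exact M.neg_mem hi
      | sr i =>
        simp only [sr_mul_sr, inv_sr', r_mul_sr, sr_mem_D]
        constructor
        · intro hi
          have : j - (i - j) = 2 * j - i := by ring
          rw [this]
          exact M.sub_mem h2 hi
        · intro hi
          have h3 : j - (i - j) = 2 * j - i := by ring
          rw [h3] at hi
          have : i = 2 * j - (2 * j - i) := by ring
          rw [this]
          exact M.sub_mem h2 hi

/-- Cardinality of the dihedral subgroup. -/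
def DEquiv (M : AddSubgroup (ZMod n)) : D M ≃ M ⊕ M where
  toFun x := match x with
    | ⟨.r j, h⟩ => Sum.inl ⟨j, h⟩
    | ⟨.sr j, h⟩ => Sum.inr ⟨j, h⟩
  invFun y := match y with
    | Sum.inl ⟨j, h⟩ => ⟨.r j, h⟩
    | Sum.inr ⟨j, h⟩ => ⟨.sr j, h⟩
  left_inv := by rintro ⟨(j | j), h⟩ <;> rfl
  right_inv := by rintro (⟨j, h⟩ | ⟨j, h⟩) <;> rfl

theorem card_D [NeZero n] (M : AddSubgroup (ZMod n)) :
    Nat.card (D M) = 2 * Nat.card M := by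
  rw [Nat.card_congr (DEquiv M), Nat.card_sum, two_mul]

theorem natCast_mem_zmultiples_iff {m : ℕ} [NeZero m] {c x : ℕ} (hc : c ∣ m) :
    ((x : ℕ) : ZMod m) ∈ zmultiples ((c : ℕ) : ZMod m) ↔ c ∣ x := by
  constructor
  · rintro ⟨k, hk⟩
    have h1 : ((x : ZMod m)) = ((k : ZMod m).val : ZMod m) * (c : ZMod m) := by
      rw [← hk]
      simp only [smul_eq_mul, zsmul_eq_mul]
      simp [ZMod.natCast_val, ZMod.cast_id]
    rw [← Nat.cast_mul, ZMod.natCast_eq_natCast_iff] at h1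
    have h2 : (m : ℤ) ∣ ((k : ZMod m).val * c : ℤ) - (x : ℤ) := by
      have := h1.dvd
      exact_mod_cast this
    have hcm : (c : ℤ) ∣ (m : ℤ) := Int.natCast_dvd_natCast.mpr hc
    have h3 : (c : ℤ) ∣ (x : ℤ) := by
      have h4 := dvd_sub (dvd_mul_left (c : ℤ) ((k : ZMod m).val : ℤ)) (hcm.trans h2)
      simpa using h4
    exact_mod_cast h3
  · rintro ⟨t, rfl⟩
    exact ⟨(t : ℤ), by push_cast [zsmul_eq_mul]; ring⟩

theorem Mh_zmultiples {m : ℕ} [NeZero m] {q : ℕ} (hq : q ∣ m) (hq2 : 2 ∣ q) :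
    Mh (zmultiples ((q : ℕ) : ZMod m)) = zmultiples ((q / 2 : ℕ) : ZMod m) := by
  have hq2m : q / 2 ∣ m := (Nat.div_dvd_of_dvd hq2).trans hq
  ext j
  rw [mem_Mh]
  have hj : ((j.val : ℕ) : ZMod m) = j := by simp [ZMod.natCast_val, ZMod.cast_id]
  have h2 : 2 * j = ((2 * j.val : ℕ) : ZMod m) := by push_cast [hj]; ring
  have lhs : (2 * j ∈ zmultiples ((q : ℕ) : ZMod m)) ↔ q ∣ 2 * j.val := by
    rw [h2, natCast_mem_zmultiples_iff hq]
  have rhs : (j ∈ zmultiples ((q / 2 : ℕ) : ZMod m)) ↔ q / 2 ∣ j.val := by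
    conv_lhs => rw [← hj]
    rw [natCast_mem_zmultiples_iff hq2m]
  rw [lhs, rhs]
  obtain ⟨s, rfl⟩ := hq2
  rw [Nat.mul_div_cancel_left s (by norm_num)]
  exact Nat.mul_dvd_mul_iff_left (by norm_num : 0 < 2)

end Stmt10Aux

open Stmt10Aux DihedralGroup AddSubgroup in
/-- Let `m ≥ 2` be even, `ℓ` an odd prime dividing `m`, `ν := ν_ℓ(m)`,
`d := ℓ^ν`, and let `R ≤ DihedralGroup m` be generated by the rotation `r (m/d)` and the
reflection `sr 0` (a dihedral subgroup of order `2d`). Then the normalizer of `R` is generated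
by `R` together with the order-two rotation `r (m/2)`, and has order `4d = 2·|R|`. -/
theorem stmt10 (m ℓ : ℕ) (hm : 2 ≤ m) (hmeven : Even m) (hℓ : ℓ.Prime) (hℓodd : Odd ℓ)
    (hdvd : ℓ ∣ m)
    (R : Subgroup (DihedralGroup m))
    (hR : R = Subgroup.closure
        {DihedralGroup.r ((m / ℓ ^ padicValNat ℓ m : ℕ) : ZMod m), DihedralGroup.sr 0}) :
    (Subgroup.normalizer (R : Set (DihedralGroup m))) = R ⊔ Subgroup.zpowers (DihedralGroup.r ((m / 2 : ℕ) : ZMod m)) ∧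
      Nat.card (Subgroup.normalizer (R : Set (DihedralGroup m))) = 4 * ℓ ^ padicValNat ℓ m ∧
      Nat.card (Subgroup.normalizer (R : Set (DihedralGroup m))) = 2 * Nat.card R := by
  haveI : NeZero m := ⟨by omega⟩
  set d : ℕ := ℓ ^ padicValNat ℓ m with hd_def
  set q : ℕ := m / d with hq_def
  have hdpos : 0 < d := pow_pos hℓ.pos _
  have hd : d ∣ m := pow_padicValNat_dvd
  have hqd : q * d = m := Nat.div_mul_cancel hd
  have hdodd : Odd d := hℓodd.pow
  have hq2 : 2 ∣ q := by
    have h2m : 2 ∣ m := hmeven.two_dvd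
    have hne : (2 : ℕ) ≠ ℓ := by
      rintro rfl
      exact absurd hℓodd (by decide)
    have hco : Nat.Coprime 2 d :=
      ((Nat.coprime_primes Nat.prime_two hℓ).mpr hne).pow_right _
    exact hco.dvd_of_dvd_mul_right (hqd ▸ h2m)
  have hq : q ∣ m := ⟨d, hqd.symm⟩
  have hq2m : q / 2 ∣ m := (Nat.div_dvd_of_dvd hq2).trans hq
  obtain ⟨s, hs⟩ := hq2
  have hspos : 0 < s := by
    have : 0 < q := Nat.div_pos (Nat.le_of_dvd (by omega) hd) hdpos
    omega
  have hq2v : q / 2 = s := by omega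
  have hmsd : m = 2 * (s * d) := by rw [← hqd, hs]; ring
  have hm2v : m / 2 = s * d := by omega
  obtain ⟨t, ht⟩ := hdodd
  have e1 : (d + 1) / 2 * q = m / 2 + q / 2 := by
    rw [hm2v, hq2v, hs, ht]
    have h21 : (2 * t + 1 + 1) / 2 = t + 1 := by omega
    rw [h21]; ring
  have hRD : R = D (zmultiples ((q : ℕ) : ZMod m)) := by
    rw [hR, ← D_eq_closure]
  have hnorm : Subgroup.normalizer (R : Set (DihedralGroup m)) = D (zmultiples ((q / 2 : ℕ) : ZMod m)) := by
    rw [hRD, normalizer_D, Mh_zmultiples hq ⟨s, hs⟩]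
  have hsup : R ⊔ Subgroup.zpowers (r ((m / 2 : ℕ) : ZMod m))
      = D (zmultiples ((q / 2 : ℕ) : ZMod m)) := by
    apply le_antisymm
    · apply sup_le
      · rw [hRD]
        apply D_mono
        apply zmultiples_le_of_mem
        exact (natCast_mem_zmultiples_iff hq2m).mpr (Nat.div_dvd_of_dvd ⟨s, hs⟩)
      · rw [Subgroup.zpowers_le]
        show ((m / 2 : ℕ) : ZMod m) ∈ zmultiples ((q / 2 : ℕ) : ZMod m)
        exact (natCast_mem_zmultiples_iff hq2m).mpr ⟨d, by rw [hm2v, hq2v]⟩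
    · rw [D_eq_closure, Subgroup.closure_le]
      rintro x hx
      simp only [Set.mem_insert_iff, Set.mem_singleton_iff] at hx
      rcases hx with rfl | rfl
      · have hA : r (((d + 1) / 2 * q : ℕ) : ZMod m) ∈ R := by
          rw [hRD]
          show (((d + 1) / 2 * q : ℕ) : ZMod m) ∈ zmultiples ((q : ℕ) : ZMod m)
          exact (natCast_mem_zmultiples_iff hq).mpr (dvd_mul_left q _)
        have hB : r ((m / 2 : ℕ) : ZMod m)
            ∈ Subgroup.zpowers (r ((m / 2 : ℕ) : ZMod m)) := Subgroup.mem_zpowers _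
        have key : r (((q / 2 : ℕ) : ℕ) : ZMod m)
            = r (((d + 1) / 2 * q : ℕ) : ZMod m) * (r ((m / 2 : ℕ) : ZMod m))⁻¹ := by
          rw [inv_r', r_mul_r]
          congr 1
          have h3 : (((d + 1) / 2 * q : ℕ) : ZMod m) = ((m / 2 + q / 2 : ℕ) : ZMod m) := by
            rw [e1]
          push_cast at h3 ⊢
          rw [h3]; ring
        rw [key]
        exact mul_mem ((le_sup_left : R ≤ _) hA)
          ((le_sup_right : Subgroup.zpowers _ ≤ _) (inv_mem hB))
      · exact (le_sup_left : R ≤ _) (hR ▸ Subgroup.subset_closure (by simp))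
  have hcard : ∀ c : ℕ, c ∣ m → Nat.card (zmultiples ((c : ℕ) : ZMod m)) = m / c := by
    intro c hc
    rw [Nat.card_zmultiples, ZMod.addOrderOf_coe c (NeZero.ne m)]
    congr 1
    exact Nat.gcd_eq_right hc
  have hcn : Nat.card (Subgroup.normalizer (R : Set (DihedralGroup m))) = 4 * d := by
    rw [hnorm, card_D, hcard (q / 2) hq2m, hq2v]
    have : m / s = 2 * d := by
      rw [show m = s * (2 * d) by rw [hmsd]; ring, Nat.mul_div_cancel_left _ hspos]
    rw [this]; ring
  have hcR : Nat.card R = 2 * d := by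
    rw [hRD, card_D, hcard q hq]
    have hqpos : 0 < q := by omega
    rw [← hqd, mul_comm q d, Nat.mul_div_cancel _ hqpos]
  refine ⟨by rw [hnorm]; exact hsup.symm, by rw [hcn], by rw [hcn, hcR]; ring⟩
end
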